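/- Let 1 < ℓ < m and 1 ≤ k < m be integers and K a Bedford-McMullen set with uniform fibers (k rectangles retained per row at every stage). Then the upper Minkowski dimension of K is at most 1 + log k / log m. -/

import Mathlib

/-- The Bedford-McMullen set determined by the sequence of patterns `D`. -/
noncomputable def BMset (m l : ℕ) (D : ℕ → Finset (Fin m × Fin l)) : Set (ℝ × ℝ) :=
  { p | ∃ ω : ℕ → Fin m × Fin l, (∀ n, ω n ∈ D n) ∧
      p.1 = ∑' n : ℕ, ((ω n).1 : ℝ) / m ^ (n + 1) ∧
      p.2 = ∑' n : ℕ, ((ω n).2 : ℝ) / l ^ (n + 1) }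

/-- The patterns have uniform fibers: each row contains exactly `k` elements. -/
def UniformFibers {m l : ℕ} (k : ℕ) (D : ℕ → Finset (Fin m × Fin l)) : Prop :=
  ∀ n, ∀ r : Fin l, ((D n).filter (fun q => q.2 = r)).card = k

/-- The minimal number of `ε`-balls needed to cover `s`, as a real number. -/
noncomputable def coverCount {X : Type*} [MetricSpace X] (s : Set X) (ε : ℝ) : ℝ :=
  sInf ((fun t : Finset X => (t.card : ℝ)) '' { t | s ⊆ ⋃ x ∈ t, Metric.ball x ε })

/-- The upper Minkowski (box-counting) dimension of `s`. -/
noncomputable def upperMinkDim {X : Type*} [MetricSpace X] (s : Set X) : ℝ :=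
  Filter.limsup (fun ε : ℝ => Real.log (coverCount s ε) / Real.log (1 / ε))
    (nhdsWithin 0 (Set.Ioi 0))

open Filter Real


private lemma digit_summable {m : ℕ} (hm : 1 < m) (a : ℕ → ℕ) (ha : ∀ j, a j < m) :
    Summable (fun j : ℕ => (a j : ℝ) / m ^ (j + 1)) := by
  have hm0 : (0:ℝ) < m := by positivity
  refine Summable.of_nonneg_of_le (fun j => by positivity) (fun j => ?_)
    (summable_geometric_of_lt_one (by positivity) (inv_lt_one_of_one_lt₀ (by exact_mod_cast hm)))
  calc (a j : ℝ) / m ^ (j+1) ≤ (m:ℝ) / m ^ (j+1) := by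
        gcongr; exact_mod_cast (ha j).le
    _ = ((m:ℝ)⁻¹) ^ j := by rw [pow_succ, inv_pow]; field_simp
    _ ≤ ((m:ℝ)⁻¹) ^ j := le_refl _

private lemma digit_tail_le {m : ℕ} (hm : 1 < m) (a : ℕ → ℕ) (ha : ∀ j, a j < m) (n : ℕ) :
    ∑' j : ℕ, (a (j + n) : ℝ) / m ^ (j + n + 1) ≤ ((m:ℝ) ^ n)⁻¹ := by
  have hm0 : (0:ℝ) < m := by positivity
  have hm1 : (1:ℝ) < m := by exact_mod_cast hm
  have hr : (0:ℝ) ≤ (m:ℝ)⁻¹ := by positivity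
  have hr1 : (m:ℝ)⁻¹ < 1 := inv_lt_one_of_one_lt₀ hm1
  have hsum := digit_summable hm a ha
  have htail : Summable (fun j : ℕ => (a (j + n) : ℝ) / m ^ (j + n + 1)) :=
    (summable_nat_add_iff (f := fun j => (a j : ℝ) / m ^ (j+1)) n).2 hsum
  have hbd : ∀ j : ℕ, (a (j + n) : ℝ) / m ^ (j + n + 1)
      ≤ (((m:ℝ) - 1) / m ^ (n+1)) * ((m:ℝ)⁻¹) ^ j := by
    intro j
    have h1 : (a (j + n) : ℝ) ≤ (m:ℝ) - 1 := by
      have := ha (j + n); have : (a (j+n) : ℝ) + 1 ≤ m := by exact_mod_cast this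
      linarith
    have h2 : (((m:ℝ) - 1) / m ^ (n+1)) * ((m:ℝ)⁻¹) ^ j = ((m:ℝ)-1) / m ^ (j + n + 1) := by
      have hp : (m:ℝ) ^ (j + n + 1) = m ^ (n+1) * m ^ j := by
        rw [← pow_add]; congr 1; omega
      rw [hp, inv_pow]; ring
    rw [h2]; gcongr
  calc ∑' j : ℕ, (a (j + n) : ℝ) / m ^ (j + n + 1)
      ≤ ∑' j : ℕ, (((m:ℝ) - 1) / m ^ (n+1)) * ((m:ℝ)⁻¹) ^ j := by
        refine Summable.tsum_le_tsum hbd htail ?_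
        exact (summable_geometric_of_lt_one hr hr1).mul_left _
    _ = (((m:ℝ) - 1) / m ^ (n+1)) * (1 - (m:ℝ)⁻¹)⁻¹ := by
        rw [tsum_mul_left, tsum_geometric_of_lt_one hr hr1]
    _ = ((m:ℝ) ^ n)⁻¹ := by
        have hne : (m:ℝ) - 1 ≠ 0 := by linarith
        have h1 : (1:ℝ) - (m:ℝ)⁻¹ = ((m:ℝ) - 1)/m := by field_simp
        rw [h1, pow_succ]
        field_simp

private lemma Dcard {m l k : ℕ} {D : ℕ → Finset (Fin m × Fin l)} (hD : UniformFibers k D)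
    (j : ℕ) : (D j).card = l * k := by
  classical
  rw [Finset.card_eq_sum_card_fiberwise (f := Prod.snd) (t := Finset.univ)
    (fun x _ => Finset.mem_univ _)]
  simp [hD j, Finset.sum_const, Finset.card_univ]

private lemma cover_bound {m l : ℕ} (hl : 1 < l) (hlm : l < m) {k : ℕ} (hk : 1 ≤ k)
    {D : ℕ → Finset (Fin m × Fin l)} (hD : UniformFibers k D)
    {ε : ℝ} {n p : ℕ} (hnp : n ≤ p)
    (hmn : ((m:ℝ)^n)⁻¹ < ε) (hlp : ((l:ℝ)^p)⁻¹ < ε) :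
    ∃ t : Finset (ℝ × ℝ), (t.card : ℝ) ≤ ((k:ℝ) * l) ^ n * (l:ℝ) ^ (p - n) ∧
      BMset m l D ⊆ ⋃ x ∈ t, Metric.ball x ε := by
  classical
  have hm1 : 1 < m := lt_trans hl hlm
  set F : ((Fin n → Fin m × Fin l) × (Fin (p - n) → Fin l)) → ℝ × ℝ :=
    fun σ => (∑ j : Fin n, ((σ.1 j).1 : ℝ) / m ^ ((j:ℕ)+1),
      ∑ j : Fin n, ((σ.1 j).2 : ℝ) / l ^ ((j:ℕ)+1)
        + ∑ j : Fin (p - n), ((σ.2 j : ℕ) : ℝ) / l ^ (n + (j:ℕ) + 1)) with hF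
  set S : Finset ((Fin n → Fin m × Fin l) × (Fin (p - n) → Fin l)) :=
    (Fintype.piFinset fun j : Fin n => D j) ×ˢ
    (Fintype.piFinset fun j : Fin (p - n) => (D (n + j)).image Prod.snd) with hS
  refine ⟨S.image F, ?_, ?_⟩
  · calc ((S.image F).card : ℝ) ≤ (S.card : ℝ) := by exact_mod_cast Finset.card_image_le
      _ = ((Fintype.piFinset fun j : Fin n => D j).card : ℝ) *
          ((Fintype.piFinset fun j : Fin (p-n) => (D (n + j)).image Prod.snd).card : ℝ) := by
          rw [hS, Finset.card_product]; push_cast; ring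
      _ ≤ ((k:ℝ) * l) ^ n * (l:ℝ) ^ (p - n) := by
          have h1 : (Fintype.piFinset fun j : Fin n => D j).card = (k * l) ^ n := by
            rw [Fintype.card_piFinset]
            simp only [Dcard hD]
            simp [mul_comm]
          have h2 : ((Fintype.piFinset fun j : Fin (p-n) => (D (n + j)).image Prod.snd).card : ℕ)
              ≤ l ^ (p - n) := by
            rw [Fintype.card_piFinset]
            calc ∏ j : Fin (p-n), ((D (n + j)).image Prod.snd).card
                ≤ ∏ _j : Fin (p-n), l := by
                  apply Finset.prod_le_prod'
                  intro i _
                  simpa using (Finset.card_le_univ ((D (n + i)).image Prod.snd))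
              _ = l ^ (p - n) := by simp
          rw [h1]
          push_cast
          gcongr
          exact_mod_cast h2
  · rintro ⟨x, y⟩ ⟨ω, hω, hx, hy⟩
    dsimp only at hx hy
    set σ : Fin n → Fin m × Fin l := fun j => ω j with hσ
    set ρ : Fin (p - n) → Fin l := fun j => (ω (n + j)).2 with hρ
    have hmem : (σ, ρ) ∈ S := by
      rw [hS, Finset.mem_product]
      constructor
      · rw [Fintype.mem_piFinset]; intro j; exact hω j
      · rw [Fintype.mem_piFinset]; intro j
        exact Finset.mem_image.mpr ⟨ω (n + j), hω _, rfl⟩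
    refine Set.mem_iUnion₂.mpr ⟨F (σ, ρ), Finset.mem_image.mpr ⟨(σ, ρ), hmem, rfl⟩, ?_⟩
    rw [Metric.mem_ball, Prod.dist_eq]
    have hxsum := digit_summable hm1 (fun j => ((ω j).1 : ℕ)) (fun j => (ω j).1.isLt)
    have hysum := digit_summable hl (fun j => ((ω j).2 : ℕ)) (fun j => (ω j).2.isLt)
    apply max_lt
    · -- x coordinate
      have hXeq : (F (σ, ρ)).1 = ∑ j ∈ Finset.range n, ((ω j).1 : ℝ) / m ^ (j+1) :=
        Fin.sum_univ_eq_sum_range (fun j => ((ω j).1 : ℝ) / m ^ (j+1)) n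
      have hsplit := Summable.sum_add_tsum_nat_add (f := fun j => ((ω j).1 : ℝ) / m ^ (j+1)) n hxsum
      have htail0 : 0 ≤ ∑' j : ℕ, ((ω (j + n)).1 : ℝ) / m ^ (j + n + 1) :=
        tsum_nonneg (fun j => by positivity)
      have htail1 : ∑' j : ℕ, ((ω (j + n)).1 : ℝ) / m ^ (j + n + 1) ≤ ((m:ℝ)^n)⁻¹ :=
        digit_tail_le hm1 (fun j => ((ω j).1 : ℕ)) (fun j => (ω j).1.isLt) n
      have : dist x (F (σ, ρ)).1 = ∑' j : ℕ, ((ω (j + n)).1 : ℝ) / m ^ (j + n + 1) := by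
        rw [Real.dist_eq, hXeq, hx, abs_of_nonneg] <;> linarith [hsplit, htail0]
      rw [this]; exact lt_of_le_of_lt htail1 hmn
    · -- y coordinate
      have hYeq : (F (σ, ρ)).2 = ∑ j ∈ Finset.range p, ((ω j).2 : ℝ) / l ^ (j+1) := by
        have e1 : (∑ j : Fin n, ((σ j).2 : ℝ) / l ^ ((j:ℕ)+1))
            = ∑ j ∈ Finset.range n, ((ω j).2 : ℝ) / l ^ (j+1) :=
          Fin.sum_univ_eq_sum_range (fun j => ((ω j).2 : ℝ) / l ^ (j+1)) n
        have e2 : (∑ j : Fin (p - n), ((ρ j : ℕ) : ℝ) / l ^ (n + (j:ℕ) + 1))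
            = ∑ j ∈ Finset.range (p - n), ((ω (n + j)).2 : ℝ) / l ^ (n + j + 1) :=
          Fin.sum_univ_eq_sum_range (fun j => ((ω (n + j)).2 : ℝ) / l ^ (n + j + 1)) (p - n)
        show (∑ j : Fin n, ((σ j).2 : ℝ) / l ^ ((j:ℕ)+1))
            + (∑ j : Fin (p - n), ((ρ j : ℕ) : ℝ) / l ^ (n + (j:ℕ) + 1)) = _
        rw [e1, e2, ← Finset.sum_range_add (f := fun j => ((ω j).2 : ℝ) / l ^ (j+1)),
          Nat.add_sub_cancel' hnp]
      have hsplit := Summable.sum_add_tsum_nat_add (f := fun j => ((ω j).2 : ℝ) / l ^ (j+1)) p hysum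
      have htail0 : 0 ≤ ∑' j : ℕ, ((ω (j + p)).2 : ℝ) / l ^ (j + p + 1) :=
        tsum_nonneg (fun j => by positivity)
      have htail1 : ∑' j : ℕ, ((ω (j + p)).2 : ℝ) / l ^ (j + p + 1) ≤ ((l:ℝ)^p)⁻¹ :=
        digit_tail_le hl (fun j => ((ω j).2 : ℕ)) (fun j => (ω j).2.isLt) p
      have : dist y (F (σ, ρ)).2 = ∑' j : ℕ, ((ω (j + p)).2 : ℝ) / l ^ (j + p + 1) := by
        rw [Real.dist_eq, hYeq, hy, abs_of_nonneg] <;> linarith [hsplit, htail0]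
      rw [this]; exact lt_of_le_of_lt htail1 hlp

private lemma coverCount_le {X : Type*} [MetricSpace X] {s : Set X} {ε : ℝ} {t : Finset X}
    (h : s ⊆ ⋃ x ∈ t, Metric.ball x ε) : coverCount s ε ≤ t.card := by
  apply csInf_le
  · exact ⟨0, fun y ⟨u, _, hu⟩ => hu ▸ by positivity⟩
  · exact ⟨t, h, rfl⟩

private lemma one_le_coverCount {X : Type*} [MetricSpace X] {s : Set X} {ε : ℝ}
    (hs : s.Nonempty) (hcov : ∃ t : Finset X, s ⊆ ⋃ x ∈ t, Metric.ball x ε) :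
    1 ≤ coverCount s ε := by
  obtain ⟨t₀, ht₀⟩ := hcov
  refine le_csInf ⟨(t₀.card : ℝ), ⟨t₀, ht₀, rfl⟩⟩ ?_
  rintro b ⟨u, hu, rfl⟩
  obtain ⟨z, hz⟩ := hs
  obtain ⟨_, ⟨x, rfl⟩, _, ⟨hx, rfl⟩, _⟩ := hu hz
  have : 0 < u.card := Finset.card_pos.mpr ⟨x, hx⟩
  show (1:ℝ) ≤ (u.card : ℝ)
  exact_mod_cast this

private lemma BMset_nonempty {m l k : ℕ} (hl : 1 < l) (hk : 1 ≤ k)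
    {D : ℕ → Finset (Fin m × Fin l)} (hD : UniformFibers k D) :
    (BMset m l D).Nonempty := by
  have hne : ∀ n, (D n).Nonempty := by
    intro n
    have h0 : 0 < ((D n).filter (fun q => q.2 = (⟨0, by omega⟩ : Fin l))).card := by
      rw [hD n ⟨0, by omega⟩]; omega
    obtain ⟨q, hq⟩ := Finset.card_pos.mp h0
    exact ⟨q, (Finset.mem_filter.mp hq).1⟩
  exact ⟨(∑' n : ℕ, (((hne n).choose).1 : ℝ) / m ^ (n+1),
          ∑' n : ℕ, (((hne n).choose).2 : ℝ) / l ^ (n+1)),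
    fun n => (hne n).choose, fun n => (hne n).choose_spec, rfl, rfl⟩

/-- A Bedford-McMullen set with uniform fibers has upper Minkowski dimension at most
`1 + log k / log m`. -/
theorem stmt12 (m l k : ℕ) (hl : 1 < l) (hlm : l < m) (hk : 1 ≤ k) (hkm : k < m)
    (D : ℕ → Finset (Fin m × Fin l)) (hD : UniformFibers k D) :
    upperMinkDim (BMset m l D) ≤ 1 + Real.log k / Real.log m := by
  have hm1 : 1 < m := lt_trans hl hlm
  have hm1R : (1:ℝ) < m := by exact_mod_cast hm1
  have hl1R : (1:ℝ) < l := by exact_mod_cast hl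
  have hlogm : 0 < Real.log m := Real.log_pos hm1R
  have hlogl : 0 < Real.log l := Real.log_pos hl1R
  have hlogk : 0 ≤ Real.log k := Real.log_nonneg (by exact_mod_cast hk)
  have hk0 : (0:ℝ) < k := by exact_mod_cast hk
  set d := 1 + Real.log k / Real.log m with hd
  unfold upperMinkDim
  refine le_of_forall_pos_le_add (fun δ hδ => ?_)
  set C := Real.log k + Real.log l with hCdef
  have hC0 : 0 ≤ C := add_nonneg hlogk hlogl.le
  set T := max 1 (C / δ) with hT
  have hev : ∀ᶠ ε in nhdsWithin (0:ℝ) (Set.Ioi 0),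
      0 ≤ Real.log (coverCount (BMset m l D) ε) / Real.log (1/ε) ∧
      Real.log (coverCount (BMset m l D) ε) / Real.log (1/ε) ≤ d + δ := by
    have hmem : Set.Ioo (0:ℝ) (Real.exp (-T)) ∈ nhdsWithin (0:ℝ) (Set.Ioi 0) :=
      Ioo_mem_nhdsGT (Real.exp_pos _)
    filter_upwards [hmem] with ε hε
    obtain ⟨hε0, hε1⟩ := hε
    set L := Real.log (1/ε) with hLdef
    have hLT : T < L := by
      rw [hLdef, one_div, Real.log_inv]
      have h := Real.log_lt_log hε0 hε1
      rw [Real.log_exp] at h; linarith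
    have hL1 : (1:ℝ) ≤ L := le_trans (le_max_left _ _) hLT.le
    have hL0 : (0:ℝ) < L := by linarith
    have hCL : C ≤ δ * L := by
      have h := le_trans (le_max_right 1 (C/δ)) hLT.le
      calc C = (C/δ) * δ := by field_simp
        _ ≤ L * δ := mul_le_mul_of_nonneg_right h hδ.le
        _ = δ * L := mul_comm _ _
    set n := ⌊L / Real.log m⌋₊ + 1 with hn
    set p := ⌊L / Real.log l⌋₊ + 1 with hp
    have hnL : (n:ℝ) ≤ L / Real.log m + 1 := by
      rw [hn]; push_cast; exact add_le_add (Nat.floor_le (div_nonneg hL0.le hlogm.le)) le_rfl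
    have hpL : (p:ℝ) ≤ L / Real.log l + 1 := by
      rw [hp]; push_cast; exact add_le_add (Nat.floor_le (div_nonneg hL0.le hlogl.le)) le_rfl
    have hnL' : L < n * Real.log m := by
      have h1 : L / Real.log m < (n:ℝ) := by
        rw [hn]; push_cast; exact Nat.lt_floor_add_one _
      exact (div_lt_iff₀ hlogm).mp h1
    have hpL' : L < p * Real.log l := by
      have h1 : L / Real.log l < (p:ℝ) := by
        rw [hp]; push_cast; exact Nat.lt_floor_add_one _
      exact (div_lt_iff₀ hlogl).mp h1
    have hnp : n ≤ p := by
      rw [hn, hp]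
      have h1 : L / Real.log m ≤ L / Real.log l :=
        div_le_div_of_nonneg_left hL0.le hlogl
          (Real.log_le_log (by linarith) (by exact_mod_cast hlm.le))
      exact Nat.add_le_add_right (Nat.floor_le_floor h1) 1
    have hmn : ((m:ℝ)^n)⁻¹ < ε := by
      have h1 : Real.log (1/ε) < Real.log ((m:ℝ)^n) := by
        rw [Real.log_pow]; exact hnL'.trans_eq rfl
      have h2 : 1/ε < (m:ℝ)^n :=
        (Real.log_lt_log_iff (by positivity) (by positivity)).mp h1
      rw [one_div] at h2
      calc ((m:ℝ)^n)⁻¹ < (ε⁻¹)⁻¹ := by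
            apply inv_strictAnti₀ (by positivity) h2
        _ = ε := inv_inv ε
    have hlp : ((l:ℝ)^p)⁻¹ < ε := by
      have h1 : Real.log (1/ε) < Real.log ((l:ℝ)^p) := by
        rw [Real.log_pow]; exact hpL'.trans_eq rfl
      have h2 : 1/ε < (l:ℝ)^p :=
        (Real.log_lt_log_iff (by positivity) (by positivity)).mp h1
      rw [one_div] at h2
      calc ((l:ℝ)^p)⁻¹ < (ε⁻¹)⁻¹ := by
            apply inv_strictAnti₀ (by positivity) h2
        _ = ε := inv_inv ε
    obtain ⟨t, htc, htcov⟩ := cover_bound hl hlm hk hD hnp hmn hlp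
    have h1 : coverCount (BMset m l D) ε ≤ (k:ℝ)^n * (l:ℝ)^p := by
      refine le_trans (coverCount_le htcov) (le_trans htc ?_)
      rw [mul_pow, mul_assoc, ← pow_add, Nat.add_sub_cancel' hnp]
    have h2 : 1 ≤ coverCount (BMset m l D) ε :=
      one_le_coverCount (BMset_nonempty hl hk hD) ⟨t, htcov⟩
    constructor
    · exact div_nonneg (Real.log_nonneg h2) hL0.le
    · rw [div_le_iff₀ hL0]
      have h3 : Real.log (coverCount (BMset m l D) ε)
          ≤ n * Real.log k + p * Real.log l := by
        calc Real.log (coverCount (BMset m l D) ε)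
            ≤ Real.log ((k:ℝ)^n * (l:ℝ)^p) := Real.log_le_log (by linarith) h1
          _ = n * Real.log k + p * Real.log l := by
            rw [Real.log_mul (by positivity) (by positivity), Real.log_pow, Real.log_pow]
      have h4 : (n:ℝ) * Real.log k ≤ (L/Real.log m + 1) * Real.log k :=
        mul_le_mul_of_nonneg_right hnL hlogk
      have h5 : (p:ℝ) * Real.log l ≤ (L/Real.log l + 1) * Real.log l :=
        mul_le_mul_of_nonneg_right hpL hlogl.le
      have h6 : (L/Real.log m + 1) * Real.log k + (L/Real.log l + 1) * Real.log l
          = L * d + C := by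
        rw [hd, hCdef]; field_simp; ring
      clear_value d C T L n p
      have h8 : Real.log (coverCount (BMset m l D) ε) ≤ L * d + C := by linarith
      have h7 : (d + δ) * L = L * d + δ * L := by ring
      linarith
  refine Filter.limsup_le_of_le ?_ (hev.mono fun ε h => h.2)
  exact Filter.IsCoboundedUnder.of_frequently_ge ((hev.mono fun ε h => h.1).frequently)
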